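/- Let R̄ be a commutative ring of characteristic p and S̄ a commutative R̄-algebra. Then the kernel of the natural surjection W(S̄) ⊗_{W(R̄)} R̄ → S̄ (induced by the Witt coordinate projection W(S̄) → S̄ and the projection W(R̄) → R̄) consists of square-zero elements, i.e. every element x of this kernel satisfies x² = 0. -/
import Mathlib


open WittVector

section

variable (p : ℕ) [Fact p.Prime] (R S : Type*) [CommRing R] [CommRing S] [Algebra R S]
  [CharP R p] [CharP S p]

/-- `W(S)` as a `W(R)`-algebra via the functorial map. -/
noncomputable instance wittAlg : Algebra (WittVector p R) (WittVector p S) :=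
  (WittVector.map (algebraMap R S)).toAlgebra

/-- `R` as a `W(R)`-algebra via the zeroth coordinate (= zeroth ghost component)
projection. -/
noncomputable instance wittProjAlg : Algebra (WittVector p R) R :=
  (WittVector.ghostComponent 0).toAlgebra

/-- `S` as a `W(R)`-algebra, via the zeroth coordinate projection followed by the
structure morphism. -/
noncomputable instance wittProjAlg' : Algebra (WittVector p R) S :=
  ((algebraMap R S).comp (WittVector.ghostComponent 0)).toAlgebra

/-- The zeroth coordinate projection `W(S) → S`, as a `W(R)`-algebra morphism. -/
noncomputable def ghostZeroAlgHom : WittVector p S →ₐ[WittVector p R] S :=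
  { (WittVector.ghostComponent 0 : WittVector p S →+* S) with
    commutes' := fun r => by
      show WittVector.ghostComponent 0 (WittVector.map (algebraMap R S) r) =
        algebraMap R S (WittVector.ghostComponent 0 r)
      simp [WittVector.ghostComponent_apply, wittPolynomial_zero,
        WittVector.map_coeff] }

/-- The structure morphism `R → S`, as a `W(R)`-algebra morphism. -/
noncomputable def structAlgHom : R →ₐ[WittVector p R] S :=
  { (algebraMap R S : R →+* S) with commutes' := fun _ => rfl }

/-- The natural surjection `W(S̄) ⊗_{W(R̄)} R̄ → S̄`. -/
noncomputable def wittTensorProj :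
    TensorProduct (WittVector p R) (WittVector p S) R →ₐ[WittVector p R] S :=
  Algebra.TensorProduct.productMap (ghostZeroAlgHom p R S) (structAlgHom p R S)

/-- the kernel of the natural surjection `W(S̄) ⊗_{W(R̄)} R̄ → S̄`
consists of square-zero elements. -/
lemma ghostComponent_zero_eq (T : Type*) [CommRing T] (x : WittVector p T) :
    WittVector.ghostComponent 0 x = x.coeff 0 := by
  simp [WittVector.ghostComponent_apply, wittPolynomial_zero]

/-- Every element of the tensor product is of the form `s ⊗ 1`. -/
lemma exists_tmul_one (x : TensorProduct (WittVector p R) (WittVector p S) R) :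
    ∃ s : WittVector p S, x = s ⊗ₜ[WittVector p R] (1 : R) := by
  induction x using TensorProduct.induction_on with
  | zero => exact ⟨0, (TensorProduct.zero_tmul _ _).symm⟩
  | tmul s r =>
    refine ⟨(WittVector.mk p (fun n => if n = 0 then r else 0)) • s, ?_⟩
    have hr : (WittVector.mk p (fun n => if n = 0 then r else 0)) • (1 : R) = r := by
      show algebraMap (WittVector p R) R _ * 1 = r
      show WittVector.ghostComponent 0 _ * 1 = r
      rw [ghostComponent_zero_eq, WittVector.coeff_mk]
      simp
    rw [TensorProduct.smul_tmul, hr]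
  | add a b ha hb =>
    obtain ⟨sa, rfl⟩ := ha
    obtain ⟨sb, rfl⟩ := hb
    exact ⟨sa + sb, (TensorProduct.add_tmul _ _ _).symm⟩

lemma verschiebung_surj_of_coeff_zero (T : Type*) [CommRing T] (s : WittVector p T)
    (hs : s.coeff 0 = 0) : ∃ a : WittVector p T, WittVector.verschiebung a = s := by
  refine ⟨WittVector.mk p (fun n => s.coeff (n + 1)), ?_⟩
  ext n
  cases n with
  | zero => rw [WittVector.verschiebung_coeff_zero, hs]
  | succ n => rw [WittVector.verschiebung_coeff_succ, WittVector.coeff_mk]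

theorem wittTensorProj_ker_squareZero :
    ∀ x ∈ RingHom.ker (wittTensorProj p R S).toRingHom, x * x = 0 := by
  intro x hx
  obtain ⟨s, rfl⟩ := exists_tmul_one p R S x
  have hproj : wittTensorProj p R S (s ⊗ₜ[WittVector p R] (1 : R)) =
      WittVector.ghostComponent 0 s := by
    simp [wittTensorProj, Algebra.TensorProduct.productMap_apply_tmul, ghostZeroAlgHom, structAlgHom]
  have hs0 : s.coeff 0 = 0 := by
    rw [RingHom.mem_ker] at hx
    rw [← ghostComponent_zero_eq, ← hproj]
    exact hx
  obtain ⟨a, rfl⟩ := verschiebung_surj_of_coeff_zero p S s hs0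
  -- `V a * V a = V (a * F (V a)) = V (a * (a * p)) = V (a * a) * p`
  have key : WittVector.verschiebung a * WittVector.verschiebung a =
      WittVector.verschiebung (a * a) * (p : WittVector p S) := by
    rw [← WittVector.verschiebung_mul_frobenius, WittVector.frobenius_verschiebung,
      ← mul_assoc]
    have : (a * (a * (p : WittVector p S))) = (a * a) * (p : WittVector p S) := by ring
    rw [mul_assoc, this]
    -- push the `p` out of `verschiebung`
    have hnsmul : (a * a) * (p : WittVector p S) = p • (a * a) := by
      rw [nsmul_eq_mul, mul_comm]
    rw [hnsmul, map_nsmul, nsmul_eq_mul, mul_comm]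
  have hmul : (WittVector.verschiebung a ⊗ₜ[WittVector p R] (1 : R)) *
      (WittVector.verschiebung a ⊗ₜ[WittVector p R] (1 : R)) =
      (WittVector.verschiebung a * WittVector.verschiebung a) ⊗ₜ[WittVector p R] (1 : R) := by
    rw [Algebra.TensorProduct.tmul_mul_tmul, mul_one]
  rw [hmul, key]
  -- `(V(a*a) * p) ⊗ 1 = ((p : W R) • V(a*a)) ⊗ 1 = V(a*a) ⊗ ((p : W R) • 1) = V(a*a) ⊗ 0`
  have hcast : (p : WittVector p S) = algebraMap (WittVector p R) (WittVector p S)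
      (p : WittVector p R) := by rw [map_natCast]
  have hsmul : WittVector.verschiebung (a * a) * (p : WittVector p S) =
      (p : WittVector p R) • WittVector.verschiebung (a * a) := by
    rw [Algebra.smul_def, hcast, mul_comm]
  rw [hsmul, TensorProduct.smul_tmul]
  have h1 : (p : WittVector p R) • (1 : R) = 0 := by
    show algebraMap (WittVector p R) R _ * 1 = 0
    rw [map_natCast, mul_one, CharP.cast_eq_zero]
  rw [h1, TensorProduct.tmul_zero]

end
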